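/- Bound on expected maximum load: suppose m bins receive S balls uniformly and independently at random, with loads Y₁,...,Y_m, so E[Yᵢ] = S/m. If (1/2)^{S/m} ≤ 1/m², then E[max_i Yᵢ] ≤ (e+1)·S/m. -/

import Mathlib

open MeasureTheory ProbabilityTheory Finset

set_option maxHeartbeats 2000000 in
/-- Bound on the expected maximum load: `S` balls are thrown independently and
uniformly at random into `m` bins; `Yᵢ` is the load of bin `i` (so `E[Yᵢ] = S/m`).
If `(1/2)^(S/m) ≤ 1/m²`, then `E[max_i Yᵢ] ≤ (e+1)·S/m`. -/
theorem expected_max_load_bound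
    {Ω : Type*} [MeasureSpace Ω] [IsProbabilityMeasure (ℙ : Measure Ω)]
    (m S : ℕ) (hm : 0 < m) (hS : 0 < S)
    (balls : Fin S → Ω → Fin m)
    (hmeas : ∀ b, Measurable (balls b))
    (hindep : iIndepFun balls ℙ)
    (huniform : ∀ b i, ℙ {ω | balls b ω = i} = 1 / m)
    (hcond : ((1 : ℝ) / 2) ^ ((S : ℝ) / m) ≤ 1 / (m : ℝ) ^ 2) :
    ∫ ω, ((Finset.univ.sup' (Finset.univ_nonempty_iff.2 ⟨⟨0, hm⟩⟩)
        fun i : Fin m => (({b | balls b ω = i} : Finset (Fin S)).card : ℝ))) ∂ℙ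
      ≤ (Real.exp 1 + 1) * S / m := by
  classical
  have hm' : (0:ℝ) < m := by exact_mod_cast hm
  set μ' : ℝ := (S:ℝ)/m with hμ'def
  have hμ'pos : 0 < μ' := div_pos (by exact_mod_cast hS) hm'
  set Y : Fin m → Ω → ℝ :=
    fun i ω => (({b | balls b ω = i} : Finset (Fin S)).card : ℝ) with hYdef
  set X : Fin m → Fin S → Ω → ℝ :=
    fun i b ω => if balls b ω = i then 1 else 0 with hXdef
  have hsetmeas : ∀ (b : Fin S) (i : Fin m), MeasurableSet {ω | balls b ω = i} := by
    intro b i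
    exact (hmeas b) (measurableSet_singleton i)
  have hXmeas : ∀ i b, Measurable (X i b) := by
    intro i b
    exact Measurable.ite (hsetmeas b i) measurable_const measurable_const
  have hYX : ∀ i ω, Y i ω = ∑ b, X i b ω := by
    intro i ω
    have : ({b | balls b ω = i} : Finset (Fin S))
        = Finset.filter (fun b => balls b ω = i) Finset.univ := rfl
    simp only [hYdef, this, Finset.card_filter, hXdef]
    push_cast
    rfl
  have hYmeas : ∀ i, Measurable (Y i) := by
    intro i
    have h1 : Measurable fun ω => ∑ b, X i b ω :=
      Finset.measurable_sum _ fun b _ => hXmeas i b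
    have : Y i = fun ω => ∑ b, X i b ω := funext fun ω => hYX i ω
    rw [this]; exact h1
  -- independence of indicators
  have hXindep : ∀ i, iIndepFun (X i) ℙ := by
    intro i
    have := hindep.comp (fun _ (j : Fin m) => if j = i then (1:ℝ) else 0)
      (fun _ => measurable_of_countable _)
    exact this
  -- probability values
  have hp : ∀ (b : Fin S) (i : Fin m), (ℙ {ω | balls b ω = i}).toReal = 1/(m:ℝ) := by
    intro b i
    rw [huniform b i, ENNReal.toReal_div]
    simp
  -- mgf of a single indicator
  have hmgf1 : ∀ i b, mgf (X i b) ℙ 1 = 1 + (Real.exp 1 - 1) * (1/(m:ℝ)) := by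
    intro i b
    have hfun : (fun ω => Real.exp (1 * X i b ω))
        = fun ω => 1 + Set.indicator {ω | balls b ω = i} (fun _ => Real.exp 1 - 1) ω := by
      funext ω
      by_cases h : balls b ω = i <;>
        simp [hXdef, h, Set.indicator_apply, Set.mem_setOf_eq]
    rw [mgf, hfun, integral_add (integrable_const 1)
      ((integrable_const _).indicator (hsetmeas b i)),
      integral_indicator_const _ (hsetmeas b i), integral_const]
    simp [hp b i, smul_eq_mul]
    simp only [measureReal_def, hp b i]
    ring
  -- mgf of the load
  have hmgfY : ∀ i, mgf (Y i) ℙ 1 = (1 + (Real.exp 1 - 1) * (1/(m:ℝ)))^S := by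
    intro i
    have hYeq : Y i = ∑ b, X i b := by
      funext ω; rw [hYX i ω]; simp [Finset.sum_apply]
    rw [hYeq, (hXindep i).mgf_sum (hXmeas i) Finset.univ]
    simp [hmgf1 i, Finset.prod_const, Finset.card_univ]
  -- pointwise bound Y i ≤ S
  have hYle : ∀ i ω, Y i ω ≤ S := by
    intro i ω
    have : ({b | balls b ω = i} : Finset (Fin S)).card ≤ S := by
      simpa using Finset.card_le_univ ({b | balls b ω = i} : Finset (Fin S))
    show (({b | balls b ω = i} : Finset (Fin S)).card : ℝ) ≤ S
    exact_mod_cast this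
  have hYnonneg : ∀ i ω, 0 ≤ Y i ω := fun i ω => by positivity
  -- Chernoff bound for each bin
  have hcher : ∀ i, (ℙ {ω | Real.exp 1 * μ' ≤ Y i ω}).toReal ≤ 1/(m:ℝ)^2 := by
    intro i
    have hint : Integrable (fun ω => Real.exp (1 * Y i ω)) ℙ := by
      refine (integrable_const (Real.exp S)).mono'
        ((Real.measurable_exp.comp ((hYmeas i).const_mul 1)).aestronglyMeasurable) ?_
      filter_upwards with ω
      rw [Real.norm_eq_abs, abs_of_pos (Real.exp_pos _), one_mul]
      exact Real.exp_le_exp.2 (hYle i ω)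
    have h1 := measure_ge_le_exp_mul_mgf (X := Y i) (μ := ℙ) (Real.exp 1 * μ')
      zero_le_one hint
    rw [hmgfY i] at h1
    have h2 : (1 + (Real.exp 1 - 1) * (1/(m:ℝ)))^S ≤ Real.exp ((Real.exp 1 - 1) * μ') := by
      have hb : (0:ℝ) ≤ 1 + (Real.exp 1 - 1) * (1/(m:ℝ)) := by
        have h1e : (1:ℝ) ≤ Real.exp 1 := Real.one_le_exp (by norm_num)
        have : (0:ℝ) ≤ (Real.exp 1 - 1) * (1/(m:ℝ)) := mul_nonneg (by linarith) (by positivity)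
        linarith
      calc (1 + (Real.exp 1 - 1) * (1/(m:ℝ)))^S
          ≤ (Real.exp ((Real.exp 1 - 1) * (1/(m:ℝ))))^S := by
            apply pow_le_pow_left₀ hb
            rw [add_comm]
            exact Real.add_one_le_exp _
        _ = Real.exp ((Real.exp 1 - 1) * μ') := by
            rw [← Real.exp_nat_mul]
            congr 1
            rw [hμ'def]; ring
    have h3 : Real.exp (-1 * (Real.exp 1 * μ')) * Real.exp ((Real.exp 1 - 1) * μ')
        = Real.exp (-μ') := by
      rw [← Real.exp_add]; congr 1; ring
    have h4 : Real.exp (-μ') ≤ ((1:ℝ)/2) ^ ((S:ℝ)/m) := by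
      rw [← hμ'def, Real.rpow_def_of_pos (by norm_num : (0:ℝ) < 1/2)]
      apply Real.exp_le_exp.2
      have hlog : Real.log (1/2) = -Real.log 2 := by
        rw [one_div, Real.log_inv]
      rw [hlog]
      have h2le : Real.log 2 ≤ 1 := by
        have := Real.log_le_sub_one_of_pos (by norm_num : (0:ℝ) < 2)
        linarith
      nlinarith [hμ'pos]
    calc (ℙ {ω | Real.exp 1 * μ' ≤ Y i ω}).toReal
        ≤ Real.exp (-1 * (Real.exp 1 * μ')) * (1 + (Real.exp 1 - 1) * (1/(m:ℝ)))^S := h1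
      _ ≤ Real.exp (-1 * (Real.exp 1 * μ')) * Real.exp ((Real.exp 1 - 1) * μ') := by
          apply mul_le_mul_of_nonneg_left h2 (Real.exp_pos _).le
      _ = Real.exp (-μ') := h3
      _ ≤ ((1:ℝ)/2) ^ ((S:ℝ)/m) := h4
      _ ≤ 1/(m:ℝ)^2 := hcond
  -- the bad event
  set hne : (Finset.univ : Finset (Fin m)).Nonempty := Finset.univ_nonempty_iff.2 ⟨⟨0, hm⟩⟩
  set M : Ω → ℝ := fun ω => Finset.univ.sup' hne (fun i => Y i ω) with hMdef
  set A : Set Ω := {ω | Real.exp 1 * μ' ≤ M ω} with hAdef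
  have hAeq : A = ⋃ i, {ω | Real.exp 1 * μ' ≤ Y i ω} := by
    ext ω
    simp [hAdef, hMdef, Finset.le_sup'_iff, Set.mem_iUnion]
  have hAimeas : ∀ i : Fin m, MeasurableSet {ω | Real.exp 1 * μ' ≤ Y i ω} := by
    intro i
    exact measurableSet_le measurable_const (hYmeas i)
  have hAmeas : MeasurableSet A := by
    rw [hAeq]; exact MeasurableSet.iUnion hAimeas
  -- union bound
  have hPA : (ℙ A).toReal ≤ 1/(m:ℝ) := by
    have h1 : ℙ A ≤ ∑ i : Fin m, ℙ {ω | Real.exp 1 * μ' ≤ Y i ω} := by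
      rw [hAeq]; exact measure_iUnion_fintype_le ℙ _
    have h2 : (ℙ A).toReal ≤ ∑ i : Fin m, (ℙ {ω | Real.exp 1 * μ' ≤ Y i ω}).toReal := by
      rw [← ENNReal.toReal_sum (fun i _ => measure_ne_top ℙ _)]
      exact ENNReal.toReal_mono (ENNReal.sum_ne_top.2 fun i _ => measure_ne_top ℙ _) h1
    calc (ℙ A).toReal ≤ ∑ i : Fin m, (ℙ {ω | Real.exp 1 * μ' ≤ Y i ω}).toReal := h2
      _ ≤ ∑ _i : Fin m, 1/(m:ℝ)^2 := Finset.sum_le_sum fun i _ => hcher i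
      _ = (m:ℝ) * (1/(m:ℝ)^2) := by simp [Finset.card_univ]
      _ = 1/(m:ℝ) := by field_simp
  -- pointwise bound on the max
  have hptwise : ∀ ω, M ω ≤ Real.exp 1 * μ' + Set.indicator A (fun _ => (S:ℝ)) ω := by
    intro ω
    by_cases h : ω ∈ A
    · rw [Set.indicator_of_mem h]
      have : M ω ≤ S := Finset.sup'_le _ _ fun i _ => hYle i ω
      have he : 0 ≤ Real.exp 1 * μ' := by positivity
      linarith
    · rw [Set.indicator_of_notMem h]
      rw [hAdef, Set.mem_setOf_eq, not_le] at h
      linarith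
  have hMnonneg : ∀ ω, 0 ≤ M ω := by
    intro ω
    have h0 : Y ⟨0, hm⟩ ω ≤ M ω := by
      rw [hMdef]
      exact Finset.le_sup' (fun i => Y i ω) (Finset.mem_univ ⟨0, hm⟩)
    exact le_trans (hYnonneg ⟨0, hm⟩ ω) h0
  -- integrate
  have hintg : Integrable (fun ω => Real.exp 1 * μ' + Set.indicator A (fun _ => (S:ℝ)) ω) ℙ :=
    (integrable_const _).add ((integrable_const _).indicator hAmeas)
  have hfinal : ∫ ω, M ω ∂ℙ ≤ Real.exp 1 * μ' + (S:ℝ) * (ℙ A).toReal := by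
    calc ∫ ω, M ω ∂ℙ
        ≤ ∫ ω, (Real.exp 1 * μ' + Set.indicator A (fun _ => (S:ℝ)) ω) ∂ℙ := by
          apply integral_mono_of_nonneg
          · filter_upwards with ω; exact hMnonneg ω
          · exact hintg
          · filter_upwards with ω; exact hptwise ω
      _ = Real.exp 1 * μ' + (S:ℝ) * (ℙ A).toReal := by
          rw [integral_add (integrable_const _) ((integrable_const _).indicator hAmeas),
            integral_const, integral_indicator_const _ hAmeas]
          simp [smul_eq_mul, mul_comm]
          exact Or.inl rfl
  have : ∫ ω, M ω ∂ℙ ≤ (Real.exp 1 + 1) * S / m := by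
    have hS' : (0:ℝ) ≤ S := Nat.cast_nonneg S
    have hmul : (S:ℝ) * (ℙ A).toReal ≤ (S:ℝ) * (1/(m:ℝ)) :=
      mul_le_mul_of_nonneg_left hPA hS'
    calc ∫ ω, M ω ∂ℙ ≤ Real.exp 1 * μ' + (S:ℝ) * (ℙ A).toReal := hfinal
      _ ≤ Real.exp 1 * μ' + (S:ℝ) * (1/(m:ℝ)) := by linarith
      _ = (Real.exp 1 + 1) * S / m := by rw [hμ'def]; field_simp
  exact this
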